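/- Let o, d, n be positive integers, β > 0, Y ∈ ℝ^{o×n}, Φ ∈ ℝ^{d×n}, and set Y_* = YΦᵀ(ΦΦᵀ + βI)⁻¹Φ and Y_⊥ = Y − Y_*. Then Φ is a critical point of the reduced loss L* (i.e. the derivative DL*(Φ) is the zero functional) if and only if Y_*ᵀ Y_⊥ = 0. -/

import Mathlib

open Matrix BigOperators

attribute [local instance] Matrix.frobeniusNormedAddCommGroup Matrix.frobeniusNormedSpace

/-- Squared Frobenius norm of a real matrix. -/
noncomputable def sqFrob {m n : ℕ} (A : Matrix (Fin m) (Fin n) ℝ) : ℝ :=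
  ∑ i, ∑ j, (A i j) ^ 2

/-- The closed-form ridge solution `W*(Φ) = YΦᵀ(ΦΦᵀ + βI)⁻¹`. -/
noncomputable def Wstar {o d n : ℕ} (β : ℝ) (Y : Matrix (Fin o) (Fin n) ℝ)
    (Φ : Matrix (Fin d) (Fin n) ℝ) : Matrix (Fin o) (Fin d) ℝ :=
  Y * Φᵀ * (Φ * Φᵀ + β • (1 : Matrix (Fin d) (Fin d) ℝ))⁻¹

/-- The reduced loss `L*(Φ) = ‖Y − W*(Φ)Φ‖_F² + β‖W*(Φ)‖_F²`. -/
noncomputable def Lstar {o d n : ℕ} (β : ℝ) (Y : Matrix (Fin o) (Fin n) ℝ)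
    (Φ : Matrix (Fin d) (Fin n) ℝ) : ℝ :=
  sqFrob (Y - Wstar β Y Φ * Φ) + β * sqFrob (Wstar β Y Φ)

namespace Stmt6Aux

lemma sqFrob_eq_trace {m k : ℕ} (A : Matrix (Fin m) (Fin k) ℝ) :
    sqFrob A = Matrix.trace (A * Aᵀ) := by
  simp [sqFrob, Matrix.trace, Matrix.mul_apply, Matrix.diag, sq]

lemma eq_zero_of_sqFrob {m k : ℕ} (A : Matrix (Fin m) (Fin k) ℝ)
    (h : sqFrob A = 0) : A = 0 := by
  ext i j
  have h1 : ∀ i ∈ Finset.univ, (0:ℝ) ≤ ∑ j, (A i j)^2 :=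
    fun i _ => Finset.sum_nonneg fun j _ => sq_nonneg _
  have := (Finset.sum_eq_zero_iff_of_nonneg h1).mp h i (Finset.mem_univ i)
  have := (Finset.sum_eq_zero_iff_of_nonneg (fun j _ => sq_nonneg (A i j))).mp this j
    (Finset.mem_univ j)
  simpa using pow_eq_zero_iff (n := 2) (by norm_num) |>.mp this

lemma Bpos {dd nn : ℕ} {β : ℝ} (hβ : 0 < β) (Φ : Matrix (Fin dd) (Fin nn) ℝ) :
    (Φᵀ * Φ + β • (1 : Matrix (Fin nn) (Fin nn) ℝ)).PosDef := by
  have h1 : (Φᵀ * Φ).PosSemidef := by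
    simpa using Matrix.posSemidef_conjTranspose_mul_self Φ
  have h2 : (β • (1 : Matrix (Fin nn) (Fin nn) ℝ)).PosDef := by
    rw [Matrix.smul_one_eq_diagonal]
    exact Matrix.posDef_diagonal_iff.mpr fun _ => hβ
  exact Matrix.PosDef.posSemidef_add h1 h2

lemma Apos {dd nn : ℕ} {β : ℝ} (hβ : 0 < β) (Φ : Matrix (Fin dd) (Fin nn) ℝ) :
    (Φ * Φᵀ + β • (1 : Matrix (Fin dd) (Fin dd) ℝ)).PosDef := by
  have h1 : (Φ * Φᵀ).PosSemidef := by
    simpa using Matrix.posSemidef_self_mul_conjTranspose Φ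
  have h2 : (β • (1 : Matrix (Fin dd) (Fin dd) ℝ)).PosDef := by
    rw [Matrix.smul_one_eq_diagonal]
    exact Matrix.posDef_diagonal_iff.mpr fun _ => hβ
  exact Matrix.PosDef.posSemidef_add h1 h2

section algebra

variable {o d n : ℕ} {β : ℝ} (Y : Matrix (Fin o) (Fin n) ℝ) (Φ : Matrix (Fin d) (Fin n) ℝ)

-- abbreviations
local notation "Bm" => Φᵀ * Φ + β • (1 : Matrix (Fin n) (Fin n) ℝ)
local notation "Am" => Φ * Φᵀ + β • (1 : Matrix (Fin d) (Fin d) ℝ)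

lemma Bsym : (Bm)ᵀ = Bm := by
  simp [Matrix.transpose_add, Matrix.transpose_smul]

lemma Binv_sym (hβ : 0 < β) : ((Bm)⁻¹)ᵀ = (Bm)⁻¹ := by
  rw [Matrix.transpose_nonsing_inv, Bsym]

lemma BBinv (hβ : 0 < β) : (Bm) * (Bm)⁻¹ = 1 :=
  Matrix.mul_nonsing_inv _ ((Matrix.isUnit_iff_isUnit_det _).mp (Bpos hβ Φ).isUnit)

lemma BinvB (hβ : 0 < β) : (Bm)⁻¹ * (Bm) = 1 :=
  Matrix.nonsing_inv_mul _ ((Matrix.isUnit_iff_isUnit_det _).mp (Bpos hβ Φ).isUnit)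

lemma AAinv (hβ : 0 < β) : (Am) * (Am)⁻¹ = 1 :=
  Matrix.mul_nonsing_inv _ ((Matrix.isUnit_iff_isUnit_det _).mp (Apos hβ Φ).isUnit)

lemma push : Φ * (Bm) = (Am) * Φ := by
  simp [Matrix.mul_add, Matrix.add_mul, Matrix.mul_smul, Matrix.smul_mul, Matrix.mul_assoc]

lemma key (hβ : 0 < β) : Φᵀ * (Am)⁻¹ = (Bm)⁻¹ * Φᵀ := by
  have h : (Bm) * Φᵀ = Φᵀ * (Am) := by
    have := congrArg Matrix.transpose (push (β := β) Φ)
    simpa [Matrix.transpose_mul, Bsym, Matrix.transpose_add, Matrix.transpose_smul] using this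
  have h2 : (Bm)⁻¹ * ((Bm) * Φᵀ) = Φᵀ := by
    rw [← Matrix.mul_assoc, BinvB Φ hβ, Matrix.one_mul]
  calc Φᵀ * (Am)⁻¹ = ((Bm)⁻¹ * ((Bm) * Φᵀ)) * (Am)⁻¹ := by rw [h2]
    _ = (Bm)⁻¹ * (Φᵀ * ((Am) * (Am)⁻¹)) := by rw [h]; simp only [Matrix.mul_assoc]
    _ = (Bm)⁻¹ * Φᵀ := by rw [AAinv Φ hβ, Matrix.mul_one]

end algebra
end Stmt6Aux

namespace Stmt6Aux
section algebra2
variable {o d n : ℕ} {β : ℝ} (Y : Matrix (Fin o) (Fin n) ℝ) (Φ : Matrix (Fin d) (Fin n) ℝ)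
local notation "Bm" => Φᵀ * Φ + β • (1 : Matrix (Fin n) (Fin n) ℝ)
local notation "Am" => Φ * Φᵀ + β • (1 : Matrix (Fin d) (Fin d) ℝ)

lemma Wstar_eq (hβ : 0 < β) : Wstar β Y Φ = Y * ((Bm)⁻¹ * Φᵀ) := by
  rw [Wstar, Matrix.mul_assoc, key Φ hβ]

lemma phiTphi : Φᵀ * Φ = (Bm) - β • (1 : Matrix (Fin n) (Fin n) ℝ) := by
  abel

lemma h1aux (hβ : 0 < β) :
    (Bm)⁻¹ * (Φᵀ * Φ) = 1 - β • (Bm)⁻¹ := by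
  have h := BinvB Φ hβ
  rw [Matrix.mul_add, Matrix.mul_smul, Matrix.mul_one] at h
  calc (Bm)⁻¹ * (Φᵀ * Φ)
      = (Bm)⁻¹ * (Φᵀ * Φ) + β • (Bm)⁻¹ - β • (Bm)⁻¹ := by abel
    _ = 1 - β • (Bm)⁻¹ := by rw [h]

lemma resid (hβ : 0 < β) : Y - Wstar β Y Φ * Φ = β • (Y * (Bm)⁻¹) := by
  rw [Wstar_eq Y Φ hβ]
  calc Y - Y * ((Bm)⁻¹ * Φᵀ) * Φ
      = Y - Y * ((Bm)⁻¹ * (Φᵀ * Φ)) := by simp only [Matrix.mul_assoc]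
    _ = Y - Y * (1 - β • (Bm)⁻¹) := by rw [h1aux Φ hβ]
    _ = β • (Y * (Bm)⁻¹) := by
        rw [Matrix.mul_sub, Matrix.mul_one, Matrix.mul_smul]; abel

lemma Lstar_trace (hβ : 0 < β) :
    Lstar β Y Φ = β * Matrix.trace (Y * (Bm)⁻¹ * Yᵀ) := by
  have hs := Binv_sym Φ hβ
  rw [Lstar, resid Y Φ hβ, Wstar_eq Y Φ hβ, sqFrob_eq_trace, sqFrob_eq_trace]
  have t2 : (β • (Y * (Bm)⁻¹)) * (β • (Y * (Bm)⁻¹))ᵀ =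
      (β * β) • (Y * ((Bm)⁻¹ * ((Bm)⁻¹ * Yᵀ))) := by
    rw [Matrix.transpose_smul, Matrix.transpose_mul, hs, Matrix.smul_mul, Matrix.mul_smul,
      smul_smul]
    simp only [Matrix.mul_assoc]
  have t1 : (Y * ((Bm)⁻¹ * Φᵀ)) * (Y * ((Bm)⁻¹ * Φᵀ))ᵀ =
      Y * ((Bm)⁻¹ * Yᵀ) - β • (Y * ((Bm)⁻¹ * ((Bm)⁻¹ * Yᵀ))) := by
    have e1 : (Y * ((Bm)⁻¹ * Φᵀ)) * (Y * ((Bm)⁻¹ * Φᵀ))ᵀ =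
        Y * (((Bm)⁻¹ * (Φᵀ * Φ)) * ((Bm)⁻¹ * Yᵀ)) := by
      rw [Matrix.transpose_mul, Matrix.transpose_mul, Matrix.transpose_transpose, hs]
      simp only [Matrix.mul_assoc]
    rw [e1, h1aux Φ hβ, Matrix.sub_mul, Matrix.one_mul, Matrix.smul_mul, Matrix.mul_sub,
      Matrix.mul_smul]
  rw [t1, t2, Matrix.trace_smul, Matrix.trace_sub, Matrix.trace_smul]
  simp only [smul_eq_mul, Matrix.mul_assoc]
  ring

end algebra2
end Stmt6Aux

namespace Stmt6Aux
attribute [local instance] Matrix.frobeniusNormedRing Matrix.frobeniusNormedAlgebra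

lemma isBBM_mul {a b c : ℕ} :
    IsBoundedBilinearMap ℝ
      (fun p : Matrix (Fin a) (Fin b) ℝ × Matrix (Fin b) (Fin c) ℝ => p.1 * p.2) where
  add_left := fun x₁ x₂ y => Matrix.add_mul x₁ x₂ y
  smul_left := fun c x y => Matrix.smul_mul c x y
  add_right := fun x y₁ y₂ => Matrix.mul_add x y₁ y₂
  smul_right := fun c x y => Matrix.mul_smul x c y
  bound := ⟨1, one_pos, fun x y => by
    rw [one_mul]; exact Matrix.frobenius_norm_mul x y⟩

noncomputable def transCLM (a b : ℕ) : Matrix (Fin a) (Fin b) ℝ →L[ℝ] Matrix (Fin b) (Fin a) ℝ :=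
  LinearMap.toContinuousLinearMap
    { toFun := fun M => Mᵀ
      map_add' := fun _ _ => Matrix.transpose_add _ _
      map_smul' := fun _ _ => Matrix.transpose_smul _ _ }

@[simp] lemma transCLM_apply {a b : ℕ} (M : Matrix (Fin a) (Fin b) ℝ) :
    transCLM a b M = Mᵀ := rfl

noncomputable def traceCLM {o n : ℕ} (β : ℝ) (Y : Matrix (Fin o) (Fin n) ℝ) :
    Matrix (Fin n) (Fin n) ℝ →L[ℝ] ℝ :=
  LinearMap.toContinuousLinearMap
    { toFun := fun M => β * Matrix.trace (Y * M * Yᵀ)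
      map_add' := by
        intro x y
        simp [Matrix.mul_add, Matrix.add_mul, Matrix.trace_add]; ring
      map_smul' := by
        intro c x
        simp [Matrix.mul_smul, Matrix.smul_mul, Matrix.trace_smul]; ring }

@[simp] lemma traceCLM_apply {o n : ℕ} (β : ℝ) (Y : Matrix (Fin o) (Fin n) ℝ)
    (M : Matrix (Fin n) (Fin n) ℝ) :
    traceCLM β Y M = β * Matrix.trace (Y * M * Yᵀ) := rfl

noncomputable def DCLM {d n : ℕ} (c : ℝ) (N : Matrix (Fin d) (Fin n) ℝ) :
    Matrix (Fin d) (Fin n) ℝ →L[ℝ] ℝ :=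
  LinearMap.toContinuousLinearMap
    { toFun := fun H => c * Matrix.trace (Nᵀ * H)
      map_add' := by intro x y; simp [Matrix.mul_add, Matrix.trace_add]; ring
      map_smul' := by intro r x; simp [Matrix.mul_smul, Matrix.trace_smul]; ring }

@[simp] lemma DCLM_apply {d n : ℕ} (c : ℝ) (N H : Matrix (Fin d) (Fin n) ℝ) :
    DCLM c N H = c * Matrix.trace (Nᵀ * H) := rfl

end Stmt6Aux

namespace Stmt6Aux
attribute [local instance] Matrix.frobeniusNormedRing Matrix.frobeniusNormedAlgebra
section deriv
variable {o d n : ℕ} {β : ℝ} (Y : Matrix (Fin o) (Fin n) ℝ) (Φ : Matrix (Fin d) (Fin n) ℝ)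
local notation "Bm" => Φᵀ * Φ + β • (1 : Matrix (Fin n) (Fin n) ℝ)

lemma hasFDerivAt_Lstar (hβ : 0 < β) :
    HasFDerivAt (Lstar β Y)
      (DCLM (-2*β) (Φ * ((Bm)⁻¹ * (Yᵀ * (Y * (Bm)⁻¹))))) Φ := by
  have hs := Binv_sym Φ hβ
  set N := Φ * ((Bm)⁻¹ * (Yᵀ * (Y * (Bm)⁻¹))) with hN
  have hfun : Lstar β Y = fun X : Matrix (Fin d) (Fin n) ℝ =>
      β * Matrix.trace (Y * (Xᵀ * X + β • (1 : Matrix (Fin n) (Fin n) ℝ))⁻¹ * Yᵀ) :=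
    funext fun X => Lstar_trace Y X hβ
  rw [hfun]
  -- derivative of X ↦ (Xᵀ, X)
  have h0 : HasFDerivAt (fun X : Matrix (Fin d) (Fin n) ℝ => (Xᵀ, X))
      ((transCLM d n).prod (ContinuousLinearMap.id ℝ _)) Φ :=
    ((transCLM d n).prod (ContinuousLinearMap.id ℝ _)).hasFDerivAt
  -- derivative of X ↦ Xᵀ * X + β • 1
  have h2 : HasFDerivAt
      (fun X : Matrix (Fin d) (Fin n) ℝ => Xᵀ * X + β • (1 : Matrix (Fin n) (Fin n) ℝ))
      ((isBBM_mul.deriv (Φᵀ, Φ)).comp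
        ((transCLM d n).prod (ContinuousLinearMap.id ℝ _))) Φ := by
    have h1 : HasFDerivAt (fun X : Matrix (Fin d) (Fin n) ℝ => Xᵀ * X)
        ((isBBM_mul.deriv (Φᵀ, Φ)).comp
          ((transCLM d n).prod (ContinuousLinearMap.id ℝ _))) Φ :=
      HasFDerivAt.comp (f := fun X : Matrix (Fin d) (Fin n) ℝ => (Xᵀ, X)) Φ
        (isBBM_mul.hasFDerivAt (Φᵀ, Φ)) h0
    exact h1.add_const _
  -- derivative of inverse at Bm
  have hu : IsUnit (Bm) := (Bpos hβ Φ).isUnit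
  have hinv : HasFDerivAt Ring.inverse
      (-(ContinuousLinearMap.mulLeftRight ℝ _ ((Bm)⁻¹) ((Bm)⁻¹))) (Bm) := by
    have h := hasFDerivAt_ringInverse (𝕜 := ℝ) hu.unit
    rw [Matrix.coe_units_inv, IsUnit.unit_spec] at h
    exact h
  have h3 : HasFDerivAt
      (fun X : Matrix (Fin d) (Fin n) ℝ =>
        (Xᵀ * X + β • (1 : Matrix (Fin n) (Fin n) ℝ))⁻¹)
      ((-(ContinuousLinearMap.mulLeftRight ℝ _ ((Bm)⁻¹) ((Bm)⁻¹))).comp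
        ((isBBM_mul.deriv (Φᵀ, Φ)).comp
          ((transCLM d n).prod (ContinuousLinearMap.id ℝ _)))) Φ := by
    have hfe : (fun X : Matrix (Fin d) (Fin n) ℝ =>
        (Xᵀ * X + β • (1 : Matrix (Fin n) (Fin n) ℝ))⁻¹) =
        (fun X : Matrix (Fin d) (Fin n) ℝ =>
          Ring.inverse (Xᵀ * X + β • (1 : Matrix (Fin n) (Fin n) ℝ))) :=
      funext fun X => Matrix.nonsing_inv_eq_ringInverse _
    rw [hfe]
    exact hinv.comp Φ h2
  have h4 := (traceCLM β Y).hasFDerivAt.comp Φ h3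
  have hD : (traceCLM β Y).comp
      ((-(ContinuousLinearMap.mulLeftRight ℝ _ ((Bm)⁻¹) ((Bm)⁻¹))).comp
        ((isBBM_mul.deriv (Φᵀ, Φ)).comp
          ((transCLM d n).prod (ContinuousLinearMap.id ℝ _)))) = DCLM (-2*β) N := by
    have hNT : Nᵀ = (Bm)⁻¹ * (Yᵀ * (Y * ((Bm)⁻¹ * Φᵀ))) := by
      rw [hN]
      simp only [Matrix.transpose_mul, Matrix.transpose_transpose, hs]
      simp only [Matrix.mul_assoc]
    ext H
    simp only [ContinuousLinearMap.comp_apply, ContinuousLinearMap.neg_apply,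
      ContinuousLinearMap.prod_apply, ContinuousLinearMap.coe_id', id_eq, transCLM_apply,
      traceCLM_apply, DCLM_apply, ContinuousLinearMap.mulLeftRight_apply,
      isBBM_mul.deriv_apply]
    show β * Matrix.trace (Y * (-((Bm)⁻¹ * (Φᵀ * H + Hᵀ * Φ) * (Bm)⁻¹)) * Yᵀ) =
      -2*β * Matrix.trace (Nᵀ * H)
    have ea : Matrix.trace (Y * ((Bm)⁻¹ * (Φᵀ * (H * ((Bm)⁻¹ * Yᵀ))))) =
        Matrix.trace (Nᵀ * H) := by
      have h := Matrix.trace_mul_comm (Y * ((Bm)⁻¹ * (Φᵀ * H))) ((Bm)⁻¹ * Yᵀ)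
      rw [hNT]
      simp only [Matrix.mul_assoc] at h ⊢
      exact h
    have eb : Matrix.trace (Y * ((Bm)⁻¹ * (Hᵀ * (Φ * ((Bm)⁻¹ * Yᵀ))))) =
        Matrix.trace (Nᵀ * H) := by
      have h := Matrix.trace_mul_comm (Y * ((Bm)⁻¹ * Hᵀ)) (Φ * ((Bm)⁻¹ * Yᵀ))
      have h2' : Matrix.trace (N * Hᵀ) = Matrix.trace (Nᵀ * H) := by
        rw [← Matrix.trace_transpose (N * Hᵀ), Matrix.transpose_mul,
          Matrix.transpose_transpose, Matrix.trace_mul_comm]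
      rw [hN] at h2' ⊢
      simp only [Matrix.mul_assoc] at h h2' ⊢
      rw [h, ← h2']
    simp only [Matrix.mul_neg, Matrix.neg_mul, Matrix.trace_neg, Matrix.mul_add,
      Matrix.add_mul, Matrix.trace_add, Matrix.mul_assoc]
    rw [ea, eb]
    ring
  replace h4 := h4.congr_fderiv hD
  exact h4

end deriv
end Stmt6Aux

namespace Stmt6Aux
section final
variable {o d n : ℕ} {β : ℝ} (Y : Matrix (Fin o) (Fin n) ℝ) (Φ : Matrix (Fin d) (Fin n) ℝ)
local notation "Bm" => Φᵀ * Φ + β • (1 : Matrix (Fin n) (Fin n) ℝ)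
local notation "Am" => Φ * Φᵀ + β • (1 : Matrix (Fin d) (Fin d) ℝ)

lemma h1aux' (hβ : 0 < β) :
    (Φᵀ * Φ) * (Bm)⁻¹ = 1 - β • (Bm)⁻¹ := by
  have h := BBinv Φ hβ
  rw [Matrix.add_mul, Matrix.smul_mul, Matrix.one_mul] at h
  calc (Φᵀ * Φ) * (Bm)⁻¹
      = (Φᵀ * Φ) * (Bm)⁻¹ + β • (Bm)⁻¹ - β • (Bm)⁻¹ := by abel
    _ = 1 - β • (Bm)⁻¹ := by rw [h]

lemma rhs_eq (hβ : 0 < β) :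
    (Y * Φᵀ * (Am)⁻¹ * Φ)ᵀ * (Y - Y * Φᵀ * (Am)⁻¹ * Φ) =
      β • (Φᵀ * (Φ * ((Bm)⁻¹ * (Yᵀ * (Y * (Bm)⁻¹))))) := by
  have hs := Binv_sym Φ hβ
  have hW : Y * Φᵀ * (Am)⁻¹ * Φ = Wstar β Y Φ * Φ := rfl
  have hres := resid Y Φ hβ
  have hWΦ : Wstar β Y Φ * Φ = Y - β • (Y * (Bm)⁻¹) := by
    have h' : Wstar β Y Φ * Φ = Y - (Y - Wstar β Y Φ * Φ) := by abel
    rw [h', hres]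
  rw [hW, hres, hWΦ]
  have hRHS : Φᵀ * (Φ * ((Bm)⁻¹ * (Yᵀ * (Y * (Bm)⁻¹)))) =
      Yᵀ * (Y * (Bm)⁻¹) - β • ((Bm)⁻¹ * (Yᵀ * (Y * (Bm)⁻¹))) := by
    have e : Φᵀ * (Φ * ((Bm)⁻¹ * (Yᵀ * (Y * (Bm)⁻¹)))) =
        ((Φᵀ * Φ) * (Bm)⁻¹) * (Yᵀ * (Y * (Bm)⁻¹)) := by
      simp only [Matrix.mul_assoc]
    rw [e, h1aux' Φ hβ, Matrix.sub_mul, Matrix.one_mul, Matrix.smul_mul]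
  rw [hRHS, Matrix.transpose_sub, Matrix.transpose_smul, Matrix.transpose_mul, hs,
    Matrix.sub_mul, Matrix.smul_mul, Matrix.mul_smul, Matrix.mul_smul, smul_sub, smul_smul]
  simp only [Matrix.mul_assoc, smul_smul]

end final
end Stmt6Aux


open Stmt6Aux in
theorem stmt_6 (o d n : ℕ) (ho : 0 < o) (hd : 0 < d) (hn : 0 < n)
    (β : ℝ) (hβ : 0 < β)
    (Y : Matrix (Fin o) (Fin n) ℝ) (Φ : Matrix (Fin d) (Fin n) ℝ) :
    (DifferentiableAt ℝ (Lstar β Y) Φ ∧ fderiv ℝ (Lstar β Y) Φ = 0) ↔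
      (Y * Φᵀ * (Φ * Φᵀ + β • (1 : Matrix (Fin d) (Fin d) ℝ))⁻¹ * Φ)ᵀ *
        (Y - Y * Φᵀ * (Φ * Φᵀ + β • (1 : Matrix (Fin d) (Fin d) ℝ))⁻¹ * Φ) = 0 := by
  have hder := hasFDerivAt_Lstar Y Φ hβ
  set N : Matrix (Fin d) (Fin n) ℝ :=
    Φ * ((Φᵀ * Φ + β • (1 : Matrix (Fin n) (Fin n) ℝ))⁻¹ *
      (Yᵀ * (Y * (Φᵀ * Φ + β • (1 : Matrix (Fin n) (Fin n) ℝ))⁻¹))) with hN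
  have hrhs := rhs_eq Y Φ hβ
  have hNzero_of : Nᵀ * N = 0 → N = 0 := by
    intro h
    have hsq : sqFrob Nᵀ = 0 := by
      rw [sqFrob_eq_trace, Matrix.transpose_transpose, h, Matrix.trace_zero]
    exact Matrix.transpose_eq_zero.mp (eq_zero_of_sqFrob Nᵀ hsq)
  constructor
  · rintro ⟨-, hf0⟩
    have hfd := hder.fderiv
    rw [hf0] at hfd
    have hNN : (-2*β) * Matrix.trace (Nᵀ * N) = 0 := by
      have := congrArg (fun L : Matrix (Fin d) (Fin n) ℝ →L[ℝ] ℝ => L N) hfd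
      simpa using this.symm
    have htr : Matrix.trace (Nᵀ * N) = 0 := by
      rcases mul_eq_zero.mp hNN with h | h
      · nlinarith
      · exact h
    have hNz : N = 0 := by
      apply hNzero_of
      have hsq : sqFrob Nᵀ = 0 := by
        rw [sqFrob_eq_trace, Matrix.transpose_transpose, htr]
      have := Matrix.transpose_eq_zero.mp (eq_zero_of_sqFrob Nᵀ hsq)
      rw [this]; simp
    rw [hrhs, ← hN, hNz]
    simp
  · intro hz
    refine ⟨hder.differentiableAt, ?_⟩
    rw [hder.fderiv]
    have hφN : Φᵀ * N = 0 := by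
      rw [hrhs, ← hN] at hz
      rcases smul_eq_zero.mp hz with h | h
      · exact absurd h (ne_of_gt hβ)
      · exact h
    have hNz : N = 0 := by
      apply hNzero_of
      rw [hN, Matrix.transpose_mul, Matrix.mul_assoc, ← hN, hφN, Matrix.mul_zero]
    rw [hNz]
    ext H
    simp
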